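/- For the Grover algorithm matrix U_N, the reciprocal of the matrix zeta function satisfies ζ_{U_N}(u)^{-1} = det(I_N - u·U_N) = (1 + u)^{N-2}(1 - 2(1 - 2/N)u + u²). -/

import Mathlib

/-- The Grover diffusion matrix `R_D = 2|D⟩⟨D| - I_N`. -/
noncomputable def groverRD (N : ℕ) : Matrix (Fin N) (Fin N) ℝ :=
  Matrix.of fun i j => 2 / (N : ℝ) - if i = j then 1 else 0

/-- The Grover oracle matrix `R_f = I_N - 2|0⟩⟨0|`. -/
def groverRf (N : ℕ) [NeZero N] : Matrix (Fin N) (Fin N) ℝ :=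
  Matrix.diagonal fun i => if i = 0 then -1 else 1

/-- The Grover algorithm matrix `U = R_D R_f`. -/
noncomputable def groverU (N : ℕ) [NeZero N] : Matrix (Fin N) (Fin N) ℝ :=
  groverRD N * groverRf N

lemma groverU_apply (N : ℕ) [NeZero N] (i j : Fin N) :
    groverU N i j = (2 / (N : ℝ) - if i = j then 1 else 0) * (if j = 0 then (-1:ℝ) else 1) := by
  simp [groverU, groverRf, Matrix.mul_diagonal, groverRD]

open Matrix in
lemma grover_decomp (N : ℕ) [NeZero N] (u : ℝ) :
    (1 : Matrix (Fin N) (Fin N) ℝ) - u • groverU N =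
      Matrix.diagonal (fun i : Fin N => if i = 0 then 1 - u else 1 + u) +
        Matrix.replicateCol Unit (fun _ : Fin N => -(2 * u / (N : ℝ))) *
          Matrix.replicateRow Unit (fun j : Fin N => if j = 0 then (-1:ℝ) else 1) := by
  ext i j
  rw [Matrix.add_apply, Matrix.mul_apply]
  simp only [Matrix.sub_apply, Matrix.one_apply, Matrix.smul_apply, groverU_apply,
    Matrix.add_apply, Matrix.diagonal_apply, Finset.univ_unique,
    Finset.sum_singleton, Matrix.replicateCol_apply, Matrix.replicateRow_apply, smul_eq_mul]
  split_ifs <;> subst_vars <;> try ring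
  all_goals (rename_i h; exact absurd rfl h)

open Matrix in
lemma grover_det_generic (N : ℕ) [NeZero N] (hN : 2 ≤ N) (u : ℝ)
    (h1 : u ≠ 1) (h2 : u ≠ -1) :
    Matrix.det (1 - u • groverU N) =
      (1 + u) ^ (N - 2) * (1 - 2 * (1 - 2 / (N : ℝ)) * u + u ^ 2) := by
  classical
  set d : Fin N → ℝ := fun i => if i = 0 then 1 - u else 1 + u with hd
  have hd0 : ∀ i, d i ≠ 0 := by
    intro i
    simp only [hd]
    split_ifs
    · intro h; apply h1; linarith
    · intro h; apply h2; linarith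
  have hdet : (Matrix.diagonal d).det = (1 - u) * (1 + u) ^ (N - 1) := by
    rw [Matrix.det_diagonal, Fintype.prod_eq_mul_prod_compl 0]
    simp only [hd, if_pos rfl]
    rw [Finset.prod_congr rfl (fun i hi => by
      simp only [Finset.mem_compl, Finset.mem_singleton] at hi
      simp [hd, hi] : ∀ i ∈ ({0}ᶜ : Finset (Fin N)), d i = 1 + u),
      Finset.prod_const]
    congr 2
    rw [Finset.card_compl, Finset.card_singleton, Fintype.card_fin]
  have hunit : IsUnit (Matrix.diagonal d).det := by
    rw [Matrix.det_diagonal]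
    exact (Finset.prod_ne_zero_iff.2 fun i _ => hd0 i).isUnit
  rw [grover_decomp, Matrix.det_add_replicateCol_mul_replicateRow hunit, hdet, Matrix.det_unique,
    Matrix.add_apply, Matrix.one_apply_eq, Matrix.mul_apply]
  have hNer : (N : ℝ) ≠ 0 := Nat.cast_ne_zero.2 (NeZero.ne N)
  have hinv : (Matrix.diagonal d)⁻¹ = Matrix.diagonal (fun i => (d i)⁻¹) := by
    apply Matrix.inv_eq_right_inv
    rw [Matrix.diagonal_mul_diagonal]
    rw [show (fun i => d i * (d i)⁻¹) = fun _ => (1:ℝ) from funext fun i => mul_inv_cancel₀ (hd0 i)]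
    exact Matrix.diagonal_one

  -- compute the sum
  have hsum : ∀ j : Fin N, (Matrix.replicateRow Unit (fun j : Fin N => if j = 0 then (-1:ℝ) else 1) *
      (Matrix.diagonal d)⁻¹) default j * (Matrix.replicateCol Unit (fun _ : Fin N => -(2 * u / (N : ℝ)))) j default
      = (if j = 0 then (-1:ℝ) else 1) * (d j)⁻¹ * (-(2 * u / (N : ℝ))) := by
    intro j
    rw [hinv, Matrix.mul_apply]
    simp [Matrix.replicateRow_apply, Matrix.replicateCol_apply, Matrix.diagonal_apply, Finset.sum_ite_eq]
  rw [Finset.sum_congr rfl fun j _ => hsum j]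
  rw [Fintype.sum_eq_add_sum_compl 0]
  have hrest : ∑ j ∈ ({0}ᶜ : Finset (Fin N)), (if j = 0 then (-1:ℝ) else 1) * (d j)⁻¹ * (-(2 * u / (N : ℝ)))
      = (N - 1 : ℝ) * ((1 + u)⁻¹ * (-(2 * u / (N : ℝ)))) := by
    rw [Finset.sum_congr rfl (fun j hj => by
      simp only [Finset.mem_compl, Finset.mem_singleton] at hj
      simp [hd, hj] : ∀ j ∈ ({0}ᶜ : Finset (Fin N)), (if j = 0 then (-1:ℝ) else 1) * (d j)⁻¹ * (-(2 * u / (N : ℝ))) = (1+u)⁻¹ * (-(2 * u / (N : ℝ))))]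
    rw [Finset.sum_const, Finset.card_compl, Finset.card_singleton, Fintype.card_fin,
      nsmul_eq_mul]
    congr 1
    have : (1:ℕ) ≤ N := le_trans (by norm_num) hN
    push_cast [Nat.cast_sub this]
    ring
  rw [hrest]
  have e0 : d 0 = 1 - u := by simp [hd]
  rw [if_pos rfl, e0]
  -- now pure field arithmetic
  obtain ⟨n, rfl⟩ : ∃ n, N = n + 2 := ⟨N - 2, by omega⟩
  have h1' : (1:ℝ) - u ≠ 0 := fun h => h1 (by linarith)
  have h2' : (1:ℝ) + u ≠ 0 := fun h => h2 (by linarith)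
  have hpow : (n + 2 : ℕ) - 1 = n + 1 := by omega
  have hpow2 : (n + 2 : ℕ) - 2 = n := by omega
  rw [hpow, hpow2, pow_succ]
  push_cast
  field_simp
  ring

open Polynomial in
/-- `ζ_{U_N}(u)⁻¹ = det(I_N - u U_N) = (1 + u)^{N-2} (1 - 2(1 - 2/N)u + u²)`. -/
theorem stmt_15 (N : ℕ) [NeZero N] (hN : 2 ≤ N) (u : ℝ) :
    Matrix.det (1 - u • groverU N) =
      (1 + u) ^ (N - 2) * (1 - 2 * (1 - 2 / (N : ℝ)) * u + u ^ 2) := by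
  set P : ℝ[X] :=
    ((1 : Matrix (Fin N) (Fin N) ℝ[X]) - (X : ℝ[X]) • (groverU N).map C).det with hP
  set Q : ℝ[X] := (1 + X) ^ (N - 2) *
    (1 - C (2 * (1 - 2 / (N : ℝ))) * X + X ^ 2) with hQ
  have hevalP : ∀ v : ℝ, eval v P = Matrix.det (1 - v • groverU N) := by
    intro v
    have := RingHom.map_det (evalRingHom v)
      ((1 : Matrix (Fin N) (Fin N) ℝ[X]) - (X : ℝ[X]) • (groverU N).map C)
    rw [hP]
    rw [show (eval v P : ℝ) = (evalRingHom v) P from rfl] at *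
    rw [this]
    congr 1
    ext i j
    simp [Matrix.one_apply, Matrix.map_apply, apply_ite (eval v)]
    try ring
  have hevalQ : ∀ v : ℝ, eval v Q =
      (1 + v) ^ (N - 2) * (1 - 2 * (1 - 2 / (N : ℝ)) * v + v ^ 2) := by
    intro v
    rw [hQ]
    simp only [eval_mul, eval_pow, eval_add, eval_sub, eval_one, eval_C, eval_X]
  have hPQ : P = Q := by
    apply Polynomial.eq_of_infinite_eval_eq
    apply Set.Infinite.mono (s := (({1, -1} : Set ℝ))ᶜ)
    · intro x hx
      simp only [Set.mem_compl_iff, Set.mem_insert_iff, Set.mem_singleton_iff, not_or] at hx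
      show eval x P = eval x Q
      rw [hevalP, hevalQ]
      exact grover_det_generic N hN x hx.1 hx.2
    · exact Set.Finite.infinite_compl (Set.toFinite _)
  rw [← hevalP u, hPQ, hevalQ u]
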